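/- If G is a regular graph and H₁, H₂ are L-cospectral graphs (same Laplacian spectrum), then the subdivision-vertex joins G∨̇H₁ and G∨̇H₂ are L-cospectral. -/

import Mathlib

open Matrix BigOperators Finset

attribute [local instance] Classical.propDecidable

/-- The coronal of a matrix `M`: `1ᵀ (xI − M)⁻¹ 1`. -/
noncomputable def coronal {n : Type*} [Fintype n] [DecidableEq n]
    (M : Matrix n n ℝ) (x : ℝ) : ℝ :=
  (fun _ => (1 : ℝ)) ⬝ᵥ ((x • (1 : Matrix n n ℝ) - M)⁻¹ *ᵥ fun _ => (1 : ℝ))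

/-- The adjacency matrix over ℝ (classical decidability). -/
noncomputable def adjM {V : Type*} (G : SimpleGraph V) : Matrix V V ℝ :=
  letI := Classical.decRel G.Adj
  G.adjMatrix ℝ

/-- The Laplacian matrix over ℝ. -/
noncomputable def lapM {V : Type*} [Fintype V] (G : SimpleGraph V) : Matrix V V ℝ :=
  letI := Classical.decRel G.Adj
  letI : DecidableEq V := Classical.decEq V
  G.lapMatrix ℝ

/-- The signless Laplacian matrix over ℝ. -/
noncomputable def signlessLapM {V : Type*} [Fintype V] (G : SimpleGraph V) : Matrix V V ℝ :=
  letI := Classical.decRel G.Adj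
  letI : DecidableEq V := Classical.decEq V
  G.degMatrix ℝ + G.adjMatrix ℝ

noncomputable instance edgeSetFintype {V : Type*} [Finite V] (G : SimpleGraph V) :
    Fintype G.edgeSet := Fintype.ofFinite _

/-- Subdivision-vertex join. -/
def svJoin {V₁ V₂ : Type*} (G₁ : SimpleGraph V₁) (G₂ : SimpleGraph V₂) :
    SimpleGraph (V₁ ⊕ (G₁.edgeSet ⊕ V₂)) where
  Adj a b :=
    match a, b with
    | Sum.inl v, Sum.inr (Sum.inl e) => v ∈ (e : Sym2 V₁)
    | Sum.inr (Sum.inl e), Sum.inl v => v ∈ (e : Sym2 V₁)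
    | Sum.inl _, Sum.inr (Sum.inr _) => True
    | Sum.inr (Sum.inr _), Sum.inl _ => True
    | Sum.inr (Sum.inr w), Sum.inr (Sum.inr w') => G₂.Adj w w'
    | _, _ => False
  symm := by
    refine ⟨?_⟩
    rintro (v | e | w) (v' | e' | w') h <;> simp_all <;> exact h.symm
  loopless := by
    refine ⟨?_⟩
    rintro (v | e | w) h <;> simp_all

/-- Subdivision-edge join. -/
def seJoin {V₁ V₂ : Type*} (G₁ : SimpleGraph V₁) (G₂ : SimpleGraph V₂) :
    SimpleGraph (V₁ ⊕ (G₁.edgeSet ⊕ V₂)) where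
  Adj a b :=
    match a, b with
    | Sum.inl v, Sum.inr (Sum.inl e) => v ∈ (e : Sym2 V₁)
    | Sum.inr (Sum.inl e), Sum.inl v => v ∈ (e : Sym2 V₁)
    | Sum.inr (Sum.inl _), Sum.inr (Sum.inr _) => True
    | Sum.inr (Sum.inr _), Sum.inr (Sum.inl _) => True
    | Sum.inr (Sum.inr w), Sum.inr (Sum.inr w') => G₂.Adj w w'
    | _, _ => False
  symm := by
    refine ⟨?_⟩
    rintro (v | e | w) (v' | e' | w') h <;> simp_all <;> exact h.symm
  loopless := by
    refine ⟨?_⟩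
    rintro (v | e | w) h <;> simp_all

/-- Number of spanning trees of a graph. -/
noncomputable def spanningTreeCount {V : Type*} (G : SimpleGraph V) : ℕ :=
  Nat.card {H : G.Subgraph // H.IsSpanning ∧ H.coe.IsTree}

section LinAlgAux
open Polynomial
variable {m : Type*} [Fintype m] [DecidableEq m]

lemma my_charpoly_conj (P M Q : Matrix m m ℝ) (h1 : P * Q = 1) :
    (P * M * Q).charpoly = M.charpoly := by
  have h2 : Q * P = 1 := mul_eq_one_comm.mp h1
  have hQP : (C : ℝ →+* ℝ[X]).mapMatrix Q * (C : ℝ →+* ℝ[X]).mapMatrix P = 1 := by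
    rw [← _root_.map_mul, h2, _root_.map_one]
  have key : charmatrix (P * M * Q) = (C : ℝ →+* ℝ[X]).mapMatrix P * charmatrix M
      * (C : ℝ →+* ℝ[X]).mapMatrix Q := by
    unfold charmatrix
    rw [mul_sub, sub_mul, _root_.map_mul, _root_.map_mul]
    congr 1
    rw [← (scalar_commute (X : ℝ[X]) (fun r' => Commute.all _ _) _).eq, mul_assoc,
      ← _root_.map_mul, h1, _root_.map_one, mul_one]
  unfold Matrix.charpoly
  rw [key, det_mul, det_mul, mul_comm, ← mul_assoc, ← det_mul, hQP, det_one, one_mul]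

lemma my_charpoly_diagonal (d : m → ℝ) :
    (diagonal d).charpoly = ∏ i, (X - C (d i)) := by
  unfold Matrix.charpoly charmatrix
  have : Matrix.scalar m (X : ℝ[X]) - (C : ℝ →+* ℝ[X]).mapMatrix (diagonal d)
      = diagonal (fun i => X - C (d i)) := by
    ext i j
    by_cases h : i = j <;>
      simp [h, Matrix.scalar, diagonal_apply, RingHom.mapMatrix_apply, Matrix.map_apply]
  rw [this, det_diagonal]

lemma my_count_eq {β : Type*} (f : m → β) (b : β) :
    Multiset.count b (Multiset.map f Finset.univ.val) = Fintype.card {a // f a = b} := by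
  classical
  rw [Multiset.count_map, Fintype.card_subtype]
  have : #(univ.filter (fun a => b = f a)) = #(univ.filter (fun a => f a = b)) := by
    congr 1
    exact Finset.filter_congr (fun x _ => eq_comm)
  rw [← this]
  rfl

lemma exists_perm_of_multiset_map_eq {β : Type*} (f g : m → β)
    (h : Multiset.map f Finset.univ.val = Multiset.map g Finset.univ.val) :
    ∃ σ : Equiv.Perm m, f ∘ σ = g := by
  classical
  have hcard : ∀ b : β, Fintype.card {a // f a = b} = Fintype.card {a // g a = b} := by
    intro b
    rw [← my_count_eq, ← my_count_eq, h]
  let E : ∀ b : β, {a // g a = b} ≃ {a // f a = b} := fun b =>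
    Fintype.equivOfCardEq (hcard b).symm
  let σ : m ≃ m :=
    (Equiv.sigmaFiberEquiv g).symm.trans
      ((Equiv.sigmaCongrRight E).trans (Equiv.sigmaFiberEquiv f))
  refine ⟨σ, funext fun a => ?_⟩
  have : σ a = (E (g a) ⟨a, rfl⟩ : {x // f x = g a}) := by
    simp [σ, Equiv.sigmaFiberEquiv]
  simp [Function.comp, this, (E (g a) ⟨a, rfl⟩).2]

lemma star_eq_transpose_real (M : Matrix m m ℝ) : star M = Mᵀ := by
  ext i j; simp [Matrix.star_apply]

lemma conj_diag_apply (M : Matrix m m ℝ) (d : m → ℝ) (i j : m) :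
    (M * diagonal d * Mᵀ) i j = ∑ k, M i k * d k * M j k := by
  have : (M * diagonal d * Mᵀ) i j = ∑ x, (M * diagonal d) i x * M j x := by
    simp [Matrix.mul_apply]
  rw [this]
  simp [Matrix.mul_diagonal]

lemma submatrix_conj_diagonal (U : Matrix m m ℝ) (d : m → ℝ) (σ : Equiv.Perm m) :
    U.submatrix id σ * diagonal (d ∘ σ) * (U.submatrix id σ)ᵀ = U * diagonal d * Uᵀ := by
  ext i j
  rw [conj_diag_apply, conj_diag_apply]
  exact Fintype.sum_equiv σ _ _ (fun k => by simp)

lemma submatrix_perm_orthogonal (U : Matrix m m ℝ) (σ : Equiv.Perm m)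
    (hU : Uᵀ * U = 1) : (U.submatrix id σ)ᵀ * (U.submatrix id σ) = 1 := by
  ext i j
  have h1 : ((U.submatrix id σ)ᵀ * (U.submatrix id σ)) i j = (Uᵀ * U) (σ i) (σ j) := by
    simp [Matrix.mul_apply]
  rw [h1, hU]
  simp [Matrix.one_apply, Equiv.apply_eq_iff_eq]

lemma vecMulVec_mulVec_eq (d u : m → ℝ) :
    vecMulVec d d *ᵥ u = (d ⬝ᵥ u) • d := by
  ext i
  simp [Matrix.mulVec, vecMulVec_apply, dotProduct, Finset.mul_sum, mul_comm, mul_left_comm]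

lemma householder (B : Matrix m m ℝ) (hB : Bᵀ = B) (x y : m → ℝ)
    (hx : B *ᵥ x = 0) (hy : B *ᵥ y = 0) (hnorm : x ⬝ᵥ x = y ⬝ᵥ y) :
    ∃ R : Matrix m m ℝ, Rᵀ = R ∧ R * R = 1 ∧ R * B = B ∧ B * R = B ∧ R *ᵥ x = y := by
  by_cases hd0 : x - y = 0
  · exact ⟨1, by simp, by simp, by simp, by simp, by simp [show x = y from sub_eq_zero.mp hd0]⟩
  set d : m → ℝ := x - y with hd
  set s : ℝ := d ⬝ᵥ d with hsdef
  have hs : 0 < s := by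
    rcases Function.ne_iff.mp hd0 with ⟨i, hi⟩
    have : 0 < d i * d i := by
      rcases lt_or_gt_of_ne (show d i ≠ 0 by simpa using hi) with h | h <;> nlinarith
    have hterm : ∀ j ∈ Finset.univ, (0:ℝ) ≤ d j * d j := fun j _ => mul_self_nonneg _
    calc (0:ℝ) < d i * d i := this
    _ ≤ ∑ j, d j * d j := Finset.single_le_sum hterm (Finset.mem_univ i)
    _ = s := rfl
  have hsne : s ≠ 0 := ne_of_gt hs
  set c : ℝ := 2 / s with hc
  set N : Matrix m m ℝ := vecMulVec d d with hN
  have hBd : B *ᵥ d = 0 := by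
    rw [hd, Matrix.mulVec_sub, hx, hy, sub_zero]
  have hNT : Nᵀ = N := by
    ext i j; simp [hN, vecMulVec_apply, mul_comm]
  have hNB : N * B = 0 := by
    ext i j
    have hcol : ∑ k, d k * B k j = 0 := by
      have := congrFun hBd j
      calc ∑ k, d k * B k j = ∑ k, Bᵀ j k * d k := by
            exact Finset.sum_congr rfl fun k _ => by simp [Matrix.transpose_apply, mul_comm]
      _ = (Bᵀ *ᵥ d) j := rfl
      _ = 0 := by rw [hB]; simpa using this
    calc (N * B) i j = ∑ k, d i * d k * B k j := by simp [hN, Matrix.mul_apply, vecMulVec_apply]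
    _ = d i * ∑ k, d k * B k j := by rw [Finset.mul_sum]; exact Finset.sum_congr rfl fun k _ => by ring
    _ = 0 := by rw [hcol, mul_zero]
  have hBN : B * N = 0 := by
    have : (B * N)ᵀ = 0 := by rw [Matrix.transpose_mul, hNT, hB, hNB]
    calc B * N = ((B * N)ᵀ)ᵀ := by rw [Matrix.transpose_transpose]
    _ = 0 := by rw [this]; simp
  have hNN : N * N = s • N := by
    ext i j
    calc (N * N) i j = ∑ k, (d i * d k) * (d k * d j) := by
          simp [hN, Matrix.mul_apply, vecMulVec_apply]
    _ = d i * d j * ∑ k, d k * d k := by rw [Finset.mul_sum]; exact Finset.sum_congr rfl fun k _ => by ring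
    _ = (s • N) i j := by simp [hN, vecMulVec_apply, hsdef, dotProduct]; ring
  refine ⟨1 - c • N, ?_, ?_, ?_, ?_, ?_⟩
  · simp [Matrix.transpose_smul, hNT]
  · have expand : (1 - c • N) * (1 - c • N) = 1 - c • N - c • N + (c * c) • (N * N) := by
      simp only [Matrix.sub_mul, Matrix.mul_sub, Matrix.smul_mul, Matrix.mul_smul,
        one_mul, mul_one, smul_smul]
      module
    rw [expand, hNN, smul_smul]
    have : c * c * s = c + c := by rw [hc]; field_simp; ring
    rw [this]
    module
  · rw [Matrix.sub_mul, one_mul, Matrix.smul_mul, hNB, smul_zero, sub_zero]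
  · rw [Matrix.mul_sub, mul_one, Matrix.mul_smul, hBN, smul_zero, sub_zero]
  · have hdx : c * (d ⬝ᵥ x) = 1 := by
      have hs2 : s = 2 * (d ⬝ᵥ x) := by
        rw [hsdef, hd]
        simp only [sub_dotProduct, dotProduct_sub, hnorm,
          dotProduct_comm y x]
        ring
      have hdxne : d ⬝ᵥ x ≠ 0 := fun h0 => hsne (by rw [hs2, h0, mul_zero])
      rw [hc, hs2]
      field_simp
    rw [Matrix.sub_mulVec, Matrix.one_mulVec, Matrix.smul_mulVec, vecMulVec_mulVec_eq,
      smul_smul, hdx, one_smul]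
    rw [hd]; abel

lemma exists_orthogonal_conj (A B : Matrix m m ℝ) (hAt : Aᵀ = A) (hBt : Bᵀ = B)
    (h : A.charpoly = B.charpoly) (v : m → ℝ) (hAv : A *ᵥ v = 0) (hBv : B *ᵥ v = 0) :
    ∃ Q : Matrix m m ℝ, Qᵀ * Q = 1 ∧ Q * Qᵀ = 1 ∧ Q * A * Qᵀ = B ∧ Q *ᵥ v = v := by
  have hA : A.IsHermitian := by
    ext i j; simpa [Matrix.conjTranspose_apply] using congrFun (congrFun hAt i) j
  have hB : B.IsHermitian := by
    ext i j; simpa [Matrix.conjTranspose_apply] using congrFun (congrFun hBt i) j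
  set U₁ : Matrix m m ℝ := (hA.eigenvectorUnitary : Matrix m m ℝ) with hU₁
  set U₂ : Matrix m m ℝ := (hB.eigenvectorUnitary : Matrix m m ℝ) with hU₂
  have hU₁o : U₁ᵀ * U₁ = 1 := by
    rw [← star_eq_transpose_real]; exact (Unitary.mem_iff.mp hA.eigenvectorUnitary.2).1
  have hU₂o : U₂ᵀ * U₂ = 1 := by
    rw [← star_eq_transpose_real]; exact (Unitary.mem_iff.mp hB.eigenvectorUnitary.2).1
  have hU₁o' : U₁ * U₁ᵀ = 1 := mul_eq_one_comm.mp hU₁o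
  have hU₂o' : U₂ * U₂ᵀ = 1 := mul_eq_one_comm.mp hU₂o
  set e₁ : m → ℝ := fun i => hA.eigenvalues i with he₁
  set e₂ : m → ℝ := fun i => hB.eigenvalues i with he₂
  have hofReal : ∀ f : m → ℝ, (RCLike.ofReal ∘ f : m → ℝ) = f := fun f => funext fun i => rfl
  have hAspec : A = U₁ * diagonal e₁ * U₁ᵀ := by
    have := hA.spectral_theorem
    rwa [Unitary.conjStarAlgAut_apply, star_eq_transpose_real, hofReal] at this
  have hBspec : B = U₂ * diagonal e₂ * U₂ᵀ := by
    have := hB.spectral_theorem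
    rwa [Unitary.conjStarAlgAut_apply, star_eq_transpose_real, hofReal] at this
  have hchA : A.charpoly = ∏ i, (X - C (e₁ i)) := by
    rw [hAspec, my_charpoly_conj _ _ _ hU₁o', my_charpoly_diagonal]
  have hchB : B.charpoly = ∏ i, (X - C (e₂ i)) := by
    rw [hBspec, my_charpoly_conj _ _ _ hU₂o', my_charpoly_diagonal]
  have hprod : ∏ i, (X - C (e₁ i)) = ∏ i, (X - C (e₂ i)) := by
    rw [← hchA, ← hchB, h]
  have hroots : Multiset.map e₁ Finset.univ.val = Multiset.map e₂ Finset.univ.val := by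
    have key : ∀ f : m → ℝ, (∏ i, (X - C (f i))).roots = Multiset.map f Finset.univ.val := by
      intro f
      have : ∏ i, (X - C (f i)) = ((Multiset.map f Finset.univ.val).map (fun a => X - C a)).prod := by
        rw [Multiset.map_map]; rfl
      rw [this, Polynomial.roots_multiset_prod_X_sub_C]
    rw [← key e₁, ← key e₂, hprod]
  obtain ⟨σ, hσ⟩ := exists_perm_of_multiset_map_eq e₁ e₂ hroots
  set V₁ : Matrix m m ℝ := U₁.submatrix id σ with hV₁
  have hV₁o : V₁ᵀ * V₁ = 1 := submatrix_perm_orthogonal U₁ σ hU₁o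
  have hV₁o' : V₁ * V₁ᵀ = 1 := mul_eq_one_comm.mp hV₁o
  have hAspec' : A = V₁ * diagonal e₂ * V₁ᵀ := by
    rw [hAspec, ← submatrix_conj_diagonal U₁ e₁ σ, hV₁]
    congr 1
    rw [show (e₁ ∘ σ) = e₂ from hσ]
  set Q₀ : Matrix m m ℝ := U₂ * V₁ᵀ with hQ₀
  have hQ₀t : Q₀ᵀ = V₁ * U₂ᵀ := by rw [hQ₀, Matrix.transpose_mul, Matrix.transpose_transpose]
  have hQ₀o : Q₀ * Q₀ᵀ = 1 := by
    rw [hQ₀, hQ₀t, Matrix.mul_assoc, ← Matrix.mul_assoc V₁ᵀ, hV₁o, one_mul, hU₂o']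
  have hQ₀o' : Q₀ᵀ * Q₀ = 1 := mul_eq_one_comm.mp hQ₀o
  have hQ₀conj : Q₀ * A * Q₀ᵀ = B := by
    rw [hAspec', hQ₀, hQ₀t, hBspec]
    calc U₂ * V₁ᵀ * (V₁ * diagonal e₂ * V₁ᵀ) * (V₁ * U₂ᵀ)
        = U₂ * ((V₁ᵀ * V₁) * diagonal e₂ * (V₁ᵀ * V₁)) * U₂ᵀ := by
          simp only [Matrix.mul_assoc]
      _ = U₂ * diagonal e₂ * U₂ᵀ := by rw [hV₁o, one_mul, Matrix.mul_one, Matrix.mul_assoc]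
  -- adjust Q₀ so that it fixes v
  have hxker : B *ᵥ (Q₀ *ᵥ v) = 0 := by
    have hAQ : A * Q₀ᵀ = Q₀ᵀ * B := by
      have : Q₀ᵀ * (Q₀ * A * Q₀ᵀ) = Q₀ᵀ * B := by rw [hQ₀conj]
      calc A * Q₀ᵀ = (Q₀ᵀ * Q₀) * A * Q₀ᵀ := by rw [hQ₀o', one_mul]
        _ = Q₀ᵀ * (Q₀ * A * Q₀ᵀ) := by simp only [Matrix.mul_assoc]
        _ = Q₀ᵀ * B := this
    have h1 : Q₀ * A = B * Q₀ := by
      have := congrArg (fun M => Q₀ * M * Q₀) hAQ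
      calc Q₀ * A = Q₀ * A * (Q₀ᵀ * Q₀) := by rw [hQ₀o', Matrix.mul_one]
        _ = (Q₀ * (A * Q₀ᵀ)) * Q₀ := by simp only [Matrix.mul_assoc]
        _ = (Q₀ * (Q₀ᵀ * B)) * Q₀ := by rw [hAQ]
        _ = B * Q₀ := by simp only [← Matrix.mul_assoc]; rw [hQ₀o, one_mul]
    rw [Matrix.mulVec_mulVec, ← h1, ← Matrix.mulVec_mulVec, hAv, Matrix.mulVec_zero]
  have hnorm : (Q₀ *ᵥ v) ⬝ᵥ (Q₀ *ᵥ v) = v ⬝ᵥ v := by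
    rw [Matrix.dotProduct_mulVec, ← Matrix.mulVec_transpose, Matrix.mulVec_mulVec, hQ₀o',
      Matrix.one_mulVec]
  obtain ⟨R, hRt, hRR, hRB, hBR, hRx⟩ := householder B hBt (Q₀ *ᵥ v) v hxker hBv hnorm
  refine ⟨R * Q₀, ?_, ?_, ?_, ?_⟩
  · rw [Matrix.transpose_mul, hRt]
    calc Q₀ᵀ * R * (R * Q₀) = Q₀ᵀ * (R * R) * Q₀ := by simp only [Matrix.mul_assoc]
      _ = 1 := by rw [hRR, Matrix.mul_one, hQ₀o']
  · rw [Matrix.transpose_mul, hRt]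
    calc R * Q₀ * (Q₀ᵀ * R) = R * (Q₀ * Q₀ᵀ) * R := by simp only [Matrix.mul_assoc]
      _ = 1 := by rw [hQ₀o, Matrix.mul_one, hRR]
  · rw [Matrix.transpose_mul, hRt]
    calc R * Q₀ * A * (Q₀ᵀ * R) = R * (Q₀ * A * Q₀ᵀ) * R := by simp only [Matrix.mul_assoc]
      _ = B := by rw [hQ₀conj, hRB, hBR]
  · rw [← Matrix.mulVec_mulVec, hRx]

end LinAlgAux

section GraphAux

lemma lapM_eq {V : Type*} [Fintype V] (G' : SimpleGraph V) [DecidableEq V]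
    [DecidableRel G'.Adj] : lapM G' = G'.lapMatrix ℝ := by
  unfold lapM
  congr!

section entries

variable {n n₂ : ℕ} (G : SimpleGraph (Fin n)) (H : SimpleGraph (Fin n₂))

lemma lap_entry {V : Type*} [Fintype V] [DecidableEq V] (G' : SimpleGraph V)
    [DecidableRel G'.Adj] (a b : V) :
    G'.lapMatrix ℝ a b =
      (if a = b then ∑ c, (if G'.Adj a c then (1:ℝ) else 0) else 0)
        - (if G'.Adj a b then 1 else 0) := by
  by_cases h : a = b <;>
    simp [SimpleGraph.lapMatrix, SimpleGraph.degMatrix, Matrix.diagonal_apply, h,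
      SimpleGraph.degree_eq_sum_if_adj, Matrix.sub_apply]

-- adjacency reductions
@[simp] lemma svJoin_adj_11 (v v' : Fin n) : (svJoin G H).Adj (Sum.inl v) (Sum.inl v') ↔ False := Iff.rfl
@[simp] lemma svJoin_adj_12 (v : Fin n) (e : G.edgeSet) :
    (svJoin G H).Adj (Sum.inl v) (Sum.inr (Sum.inl e)) ↔ v ∈ (e : Sym2 (Fin n)) := Iff.rfl
@[simp] lemma svJoin_adj_13 (v : Fin n) (w : Fin n₂) :
    (svJoin G H).Adj (Sum.inl v) (Sum.inr (Sum.inr w)) ↔ True := Iff.rfl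
@[simp] lemma svJoin_adj_21 (e : G.edgeSet) (v : Fin n) :
    (svJoin G H).Adj (Sum.inr (Sum.inl e)) (Sum.inl v) ↔ v ∈ (e : Sym2 (Fin n)) := Iff.rfl
@[simp] lemma svJoin_adj_22 (e e' : G.edgeSet) :
    (svJoin G H).Adj (Sum.inr (Sum.inl e)) (Sum.inr (Sum.inl e')) ↔ False := Iff.rfl
@[simp] lemma svJoin_adj_23 (e : G.edgeSet) (w : Fin n₂) :
    (svJoin G H).Adj (Sum.inr (Sum.inl e)) (Sum.inr (Sum.inr w)) ↔ False := Iff.rfl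
@[simp] lemma svJoin_adj_31 (w : Fin n₂) (v : Fin n) :
    (svJoin G H).Adj (Sum.inr (Sum.inr w)) (Sum.inl v) ↔ True := Iff.rfl
@[simp] lemma svJoin_adj_32 (w : Fin n₂) (e : G.edgeSet) :
    (svJoin G H).Adj (Sum.inr (Sum.inr w)) (Sum.inr (Sum.inl e)) ↔ False := Iff.rfl
@[simp] lemma svJoin_adj_33 (w w' : Fin n₂) :
    (svJoin G H).Adj (Sum.inr (Sum.inr w)) (Sum.inr (Sum.inr w')) ↔ H.Adj w w' := Iff.rfl


lemma sum_adj_inl [DecidableRel (svJoin G H).Adj] (v : Fin n) :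
    ∑ c, (if (svJoin G H).Adj (Sum.inl v) c then (1:ℝ) else 0) =
      (∑ e : G.edgeSet, if v ∈ (e : Sym2 (Fin n)) then (1:ℝ) else 0) + n₂ := by
  rw [Fintype.sum_sum_type, Fintype.sum_sum_type]
  simp [-Finset.sum_boole]

lemma sum_adj_inrl [DecidableRel (svJoin G H).Adj] (e : G.edgeSet) :
    ∑ c, (if (svJoin G H).Adj (Sum.inr (Sum.inl e)) c then (1:ℝ) else 0) =
      ∑ v' : Fin n, if v' ∈ (e : Sym2 (Fin n)) then (1:ℝ) else 0 := by
  rw [Fintype.sum_sum_type, Fintype.sum_sum_type]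
  simp [-Finset.sum_boole]

lemma sum_adj_inrr [DecidableRel (svJoin G H).Adj] (w : Fin n₂) :
    ∑ c, (if (svJoin G H).Adj (Sum.inr (Sum.inr w)) c then (1:ℝ) else 0) =
      (n : ℝ) + ∑ w' : Fin n₂, (if H.Adj w w' then (1:ℝ) else 0) := by
  rw [Fintype.sum_sum_type, Fintype.sum_sum_type]
  simp [-Finset.sum_boole]

lemma L11 [DecidableEq (Fin n ⊕ (G.edgeSet ⊕ Fin n₂))] [DecidableRel (svJoin G H).Adj] (v v' : Fin n) : (svJoin G H).lapMatrix ℝ (Sum.inl v) (Sum.inl v') =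
    if v = v' then ((∑ e : G.edgeSet, if v ∈ (e : Sym2 (Fin n)) then (1:ℝ) else 0) + n₂) else 0 := by
  rw [lap_entry, sum_adj_inl]
  simp

lemma L12 [DecidableEq (Fin n ⊕ (G.edgeSet ⊕ Fin n₂))] [DecidableRel (svJoin G H).Adj] (v : Fin n) (e : G.edgeSet) : (svJoin G H).lapMatrix ℝ (Sum.inl v) (Sum.inr (Sum.inl e)) =
    -(if v ∈ (e : Sym2 (Fin n)) then (1:ℝ) else 0) := by
  rw [lap_entry]; simp

lemma L13 [DecidableEq (Fin n ⊕ (G.edgeSet ⊕ Fin n₂))] [DecidableRel (svJoin G H).Adj] (v : Fin n) (w : Fin n₂) : (svJoin G H).lapMatrix ℝ (Sum.inl v) (Sum.inr (Sum.inr w)) = -1 := by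
  rw [lap_entry]; simp

lemma L21 [DecidableEq (Fin n ⊕ (G.edgeSet ⊕ Fin n₂))] [DecidableRel (svJoin G H).Adj] (e : G.edgeSet) (v : Fin n) : (svJoin G H).lapMatrix ℝ (Sum.inr (Sum.inl e)) (Sum.inl v) =
    -(if v ∈ (e : Sym2 (Fin n)) then (1:ℝ) else 0) := by
  rw [lap_entry]; simp

lemma L22 [DecidableEq (Fin n ⊕ (G.edgeSet ⊕ Fin n₂))] [DecidableRel (svJoin G H).Adj] (e e' : G.edgeSet) : (svJoin G H).lapMatrix ℝ (Sum.inr (Sum.inl e)) (Sum.inr (Sum.inl e')) =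
    if e = e' then (∑ v' : Fin n, if v' ∈ (e : Sym2 (Fin n)) then (1:ℝ) else 0) else 0 := by
  rw [lap_entry, sum_adj_inrl]
  simp

lemma L23 [DecidableEq (Fin n ⊕ (G.edgeSet ⊕ Fin n₂))] [DecidableRel (svJoin G H).Adj] (e : G.edgeSet) (w : Fin n₂) :
    (svJoin G H).lapMatrix ℝ (Sum.inr (Sum.inl e)) (Sum.inr (Sum.inr w)) = 0 := by
  rw [lap_entry]; simp

lemma L31 [DecidableEq (Fin n ⊕ (G.edgeSet ⊕ Fin n₂))] [DecidableRel (svJoin G H).Adj] (w : Fin n₂) (v : Fin n) :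
    (svJoin G H).lapMatrix ℝ (Sum.inr (Sum.inr w)) (Sum.inl v) = -1 := by
  rw [lap_entry]; simp

lemma L32 [DecidableEq (Fin n ⊕ (G.edgeSet ⊕ Fin n₂))] [DecidableRel (svJoin G H).Adj] (w : Fin n₂) (e : G.edgeSet) :
    (svJoin G H).lapMatrix ℝ (Sum.inr (Sum.inr w)) (Sum.inr (Sum.inl e)) = 0 := by
  rw [lap_entry]; simp

lemma L33 [DecidableEq (Fin n ⊕ (G.edgeSet ⊕ Fin n₂))] [DecidableRel (svJoin G H).Adj] (w w' : Fin n₂) :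
    (svJoin G H).lapMatrix ℝ (Sum.inr (Sum.inr w)) (Sum.inr (Sum.inr w')) =
      H.lapMatrix ℝ w w' + (n : ℝ) * (if w = w' then 1 else 0) := by
  rw [lap_entry (svJoin G H), sum_adj_inrr, lap_entry H]
  by_cases h : w = w' <;> simp [h] <;> ring

end entries

section comm

variable {n n₂ : ℕ} (G : SimpleGraph (Fin n)) (H₁ H₂ : SimpleGraph (Fin n₂))

lemma key_comm (Q : Matrix (Fin n₂) (Fin n₂) ℝ)
    (hQL : Q * H₁.lapMatrix ℝ = H₂.lapMatrix ℝ * Q)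
    (hrow : ∀ w, ∑ k, Q w k = 1) (hcol : ∀ k, ∑ w, Q w k = 1) :
    (fromBlocks (1 : Matrix (Fin n) (Fin n) ℝ) 0 0
        (fromBlocks (1 : Matrix G.edgeSet G.edgeSet ℝ) 0 0 Q)) * (svJoin G H₁).lapMatrix ℝ
      = (svJoin G H₂).lapMatrix ℝ *
        (fromBlocks (1 : Matrix (Fin n) (Fin n) ℝ) 0 0
          (fromBlocks (1 : Matrix G.edgeSet G.edgeSet ℝ) 0 0 Q)) := by
  ext a b
  rcases a with v | e | w <;> rcases b with v' | e' | w' <;>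
    simp only [Matrix.mul_apply, Fintype.sum_sum_type, Matrix.fromBlocks_apply₁₁,
      Matrix.fromBlocks_apply₁₂, Matrix.fromBlocks_apply₂₁, Matrix.fromBlocks_apply₂₂,
      L11, L12, L13, L21, L22, L23, L31, L32, L33,
      Matrix.one_apply, Matrix.zero_apply, zero_mul, mul_zero, Finset.sum_const_zero,
      add_zero, zero_add, ite_mul, mul_ite, one_mul, mul_one,
      Finset.sum_ite_eq, Finset.sum_ite_eq', Finset.mem_univ, if_true, mul_neg, neg_mul]
  · -- inl.inl
    by_cases h : v = v' <;> simp [h]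
  · -- inl.inr.inl
    have hswap : ∀ x : Fin n, (if x ∈ (e' : Sym2 (Fin n)) then if v = x then (1:ℝ) else 0 else 0)
        = if v = x then (if v ∈ (e' : Sym2 (Fin n)) then 1 else 0) else 0 := fun x => by
      by_cases h : v = x
      · subst h; simp
      · simp [h]
    simp [hswap, Finset.sum_ite_eq]
  · -- inl.inr.inr
    simp only [Finset.sum_neg_distrib]
    rw [hcol w']
    simp
  · -- inr.inl.inl
    have hswap : ∀ x : G.edgeSet, (if v' ∈ (x : Sym2 (Fin n)) then if e = x then (1:ℝ) else 0 else 0)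
        = if e = x then (if v' ∈ (e : Sym2 (Fin n)) then 1 else 0) else 0 := fun x => by
      by_cases h : e = x
      · subst h; simp
      · simp [h]
    simp [hswap, Finset.sum_ite_eq]
  · -- inr.inl.inr.inl
    by_cases h : e = e' <;> simp [h]
  · simp
  · -- inr.inr.inl
    simp only [ite_self, neg_zero, Finset.sum_const_zero, zero_add, Finset.sum_neg_distrib]
    rw [hrow w]
  · simp
  · -- inr.inr.inr.inr
    have hq := congrFun (congrFun hQL w) w'
    rw [Matrix.mul_apply, Matrix.mul_apply] at hq
    simp only [mul_add, add_mul, Finset.sum_add_distrib, mul_ite, ite_mul, mul_zero, zero_mul,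
      Finset.sum_ite_eq, Finset.sum_ite_eq', Finset.mem_univ, if_true, neg_zero,
      Finset.sum_const_zero, zero_add]
    rw [hq, mul_comm]

end comm

end GraphAux


/-- If `G` is regular and `H₁, H₂` are `L`-cospectral, then `G ∨̇ H₁` and `G ∨̇ H₂`
are `L`-cospectral. -/
theorem svJoin_L_cospectral_right (n n₂ r : ℕ) (G : SimpleGraph (Fin n))
    (hreg : G.IsRegularOfDegree r)
    (H₁ H₂ : SimpleGraph (Fin n₂))
    (hcosp : (lapM H₁).charpoly = (lapM H₂).charpoly) :
    (lapM (svJoin G H₁)).charpoly = (lapM (svJoin G H₂)).charpoly := by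
  classical
  have hL1 : lapM H₁ = H₁.lapMatrix ℝ := lapM_eq H₁
  have hL2 : lapM H₂ = H₂.lapMatrix ℝ := lapM_eq H₂
  have hJ1 : lapM (svJoin G H₁) = (svJoin G H₁).lapMatrix ℝ := lapM_eq _
  have hJ2 : lapM (svJoin G H₂) = (svJoin G H₂).lapMatrix ℝ := lapM_eq _
  have hsym1 : (H₁.lapMatrix ℝ)ᵀ = H₁.lapMatrix ℝ := SimpleGraph.isSymm_lapMatrix (G := H₁) (R := ℝ)
  have hsym2 : (H₂.lapMatrix ℝ)ᵀ = H₂.lapMatrix ℝ := SimpleGraph.isSymm_lapMatrix (G := H₂) (R := ℝ)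
  have hker1 : H₁.lapMatrix ℝ *ᵥ (fun _ => (1:ℝ)) = 0 :=
    SimpleGraph.lapMatrix_mulVec_const_eq_zero H₁
  have hker2 : H₂.lapMatrix ℝ *ᵥ (fun _ => (1:ℝ)) = 0 :=
    SimpleGraph.lapMatrix_mulVec_const_eq_zero H₂
  have hch : (H₁.lapMatrix ℝ).charpoly = (H₂.lapMatrix ℝ).charpoly := by
    rw [← hL1, ← hL2]; exact hcosp
  obtain ⟨Q, hQtQ, hQQt, hconj, hQ1⟩ :=
    exists_orthogonal_conj (H₁.lapMatrix ℝ) (H₂.lapMatrix ℝ) hsym1 hsym2 hch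
      (fun _ => 1) hker1 hker2
  have hQL : Q * H₁.lapMatrix ℝ = H₂.lapMatrix ℝ * Q := by
    calc Q * H₁.lapMatrix ℝ = Q * H₁.lapMatrix ℝ * (Qᵀ * Q) := by rw [hQtQ, Matrix.mul_one]
      _ = (Q * H₁.lapMatrix ℝ * Qᵀ) * Q := by simp only [Matrix.mul_assoc]
      _ = H₂.lapMatrix ℝ * Q := by rw [hconj]
  have hrow : ∀ w, ∑ k, Q w k = 1 := by
    intro w
    have := congrFun hQ1 w
    simpa [Matrix.mulVec, dotProduct] using this
  have hQt1 : Qᵀ *ᵥ (fun _ => (1:ℝ)) = fun _ => 1 := by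
    calc Qᵀ *ᵥ (fun _ => (1:ℝ)) = Qᵀ *ᵥ (Q *ᵥ fun _ => 1) := by rw [hQ1]
      _ = (Qᵀ * Q) *ᵥ (fun _ => 1) := by rw [Matrix.mulVec_mulVec]
      _ = fun _ => 1 := by rw [hQtQ, Matrix.one_mulVec]
  have hcol : ∀ k, ∑ w, Q w k = 1 := by
    intro k
    have := congrFun hQt1 k
    simpa [Matrix.mulVec, dotProduct, Matrix.transpose_apply] using this
  set P : Matrix (Fin n ⊕ (G.edgeSet ⊕ Fin n₂)) (Fin n ⊕ (G.edgeSet ⊕ Fin n₂)) ℝ :=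
    fromBlocks (1 : Matrix (Fin n) (Fin n) ℝ) 0 0
      (fromBlocks (1 : Matrix G.edgeSet G.edgeSet ℝ) 0 0 Q) with hPdef
  have hPPt : P * Pᵀ = 1 := by
    simp [hPdef, Matrix.fromBlocks_transpose, Matrix.fromBlocks_multiply, hQQt,
      Matrix.fromBlocks_one]
  have hcomm := key_comm G H₁ H₂ Q hQL hrow hcol
  have hM : (svJoin G H₂).lapMatrix ℝ = P * (svJoin G H₁).lapMatrix ℝ * Pᵀ := by
    calc (svJoin G H₂).lapMatrix ℝ = (svJoin G H₂).lapMatrix ℝ * (P * Pᵀ) := by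
          rw [hPPt, Matrix.mul_one]
      _ = ((svJoin G H₂).lapMatrix ℝ * P) * Pᵀ := by rw [Matrix.mul_assoc]
      _ = (P * (svJoin G H₁).lapMatrix ℝ) * Pᵀ := by rw [← hcomm]
  rw [hJ1, hJ2, hM]
  exact (my_charpoly_conj P _ Pᵀ hPPt).symm
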